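/- Every element of the algebra 𝓜 can be written as a finite ℚ-linear combination Σ_{i=1}^{n} a_i · (τ ↦ Θ_{ξ_i}(τ/N)) for some theta data ξ₁,…,ξ_n, rational numbers a₁,…,a_n, and a single integer N ≥ 1. -/

import Mathlib

open scoped BigOperators

/-- The ℚ-bilinear pairing on `Fin n → ℚ` induced by an integer matrix,
representing a symmetric bilinear form `B : Γ × Γ → ℤ` on the finitely generated
free abelian group `Γ = ℤ^n`, extended ℚ-bilinearly to `Γ ⊗ ℚ = ℚ^n`. -/
def intPair {n : ℕ} (M : Matrix (Fin n) (Fin n) ℤ) (x y : Fin n → ℚ) : ℚ :=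
  ∑ i, ∑ j, (M i j : ℚ) * x i * y j

/-- The sign function: `sgn x = x / |x|` for `x ≠ 0` and `sgn 0 = 0`. -/
def sgn (x : ℚ) : ℚ := if 0 < x then 1 else if x < 0 then -1 else 0

/-- Raw theta data `ξ = (Γ, B, ν̄, c₁,…,c_b, c₁′,…,c_b′, α₁,…,α_k)`, with
`Γ = ℤ^n` and `B` given by the integer matrix `M`. -/
structure ThetaData where
  n : ℕ
  b : ℕ
  k : ℕ
  M : Matrix (Fin n) (Fin n) ℤ
  c : Fin b → Fin n → ℚ
  c' : Fin b → Fin n → ℚ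
  nubar : Fin n → ℚ
  alpha : Fin k → Fin n → ℚ

namespace ThetaData

/-- The element `ν̄ + g` of the coset `ν̄ + Γ ⊆ Γ ⊗ ℚ`. -/
def nu (ξ : ThetaData) (g : Fin ξ.n → ℤ) : Fin ξ.n → ℚ :=
  ξ.nubar + fun t => (g t : ℚ)

/-- Conditions (i)–(v) on theta data:
(i) `B` is a non-degenerate symmetric bilinear form whose real (equivalently,
rational) extension has signature `(a, b)` with `a = n - b ≥ b` (expressed by
non-degeneracy together with a positive definite subspace of dimension `n - b`,
and the negative definite `b`-dimensional subspace from (ii));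
(ii) `c₁,…,c_b` span a `b`-dimensional negative definite subspace;
(iii) the orthogonality conditions on `c_i, c_j′`;
(iv) `B(c_i′, ν) ≠ 0` for all `ν ∈ ν̄ + Γ`;
(v) is automatic. -/
def IsThetaData (ξ : ThetaData) : Prop :=
  2 * ξ.b ≤ ξ.n ∧
  ξ.M.IsSymm ∧
  (∀ x : Fin ξ.n → ℚ, (∀ y, intPair ξ.M x y = 0) → x = 0) ∧
  (∃ P : Submodule ℚ (Fin ξ.n → ℚ), Module.finrank ℚ P = ξ.n - ξ.b ∧
    ∀ v ∈ P, v ≠ 0 → 0 < intPair ξ.M v v) ∧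
  Module.finrank ℚ (Submodule.span ℚ (Set.range ξ.c)) = ξ.b ∧
  (∀ v ∈ Submodule.span ℚ (Set.range ξ.c), v ≠ 0 → intPair ξ.M v v < 0) ∧
  (∀ i j, i ≠ j → intPair ξ.M (ξ.c i) (ξ.c' j) = 0) ∧
  (∀ i j, intPair ξ.M (ξ.c' i) (ξ.c' j) = 0) ∧
  (∀ i, intPair ξ.M (ξ.c i) (ξ.c' i) < 0) ∧
  (∀ i (g : Fin ξ.n → ℤ), intPair ξ.M (ξ.c' i) (ξ.nu g) ≠ 0)

/-- The term of the theta series `Θ_ξ` indexed by `ν = ν̄ + g ∈ ν̄ + Γ`: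
`∏_{i=1}^{b} (sgn(B(c_i,ν)) − sgn(B(c_i′,ν))) ∏_{j=1}^{k} B(α_j,ν) e^{2πi Q(ν) τ}`,
where `Q(ν) = B(ν,ν)/2`. -/
noncomputable def term (ξ : ThetaData) (τ : ℂ) (g : Fin ξ.n → ℤ) : ℂ :=
  (((∏ i, (sgn (intPair ξ.M (ξ.c i) (ξ.nu g)) - sgn (intPair ξ.M (ξ.c' i) (ξ.nu g)))) *
      ∏ j, intPair ξ.M (ξ.alpha j) (ξ.nu g) : ℚ) : ℂ) *
    Complex.exp (2 * (Real.pi : ℂ) * Complex.I *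
      ((intPair ξ.M (ξ.nu g) (ξ.nu g) / 2 : ℚ) : ℂ) * τ)

/-- The theta series `Θ_ξ(τ)`. -/
noncomputable def Theta (ξ : ThetaData) (τ : ℂ) : ℂ :=
  ∑' g : Fin ξ.n → ℤ, ξ.term τ g

end ThetaData

open UpperHalfPlane in
/-- The ℚ-subalgebra `𝓜` of the ℂ-valued functions on the upper half plane generated
by the functions `τ ↦ Θ_ξ(τ/N)` for all theta data `ξ` and integers `N ≥ 1`. -/
noncomputable def MM : Subalgebra ℚ (UpperHalfPlane → ℂ) :=
  Algebra.adjoin ℚ {f | ∃ (ξ : ThetaData) (N : ℕ), ξ.IsThetaData ∧ 1 ≤ N ∧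
    f = fun τ : UpperHalfPlane => ξ.Theta ((τ : ℂ) / N)}


/-! ### Auxiliary infrastructure -/

section TsumMul

theorem summable_norm_complex {α : Type*} {f : α → ℂ} (hf : Summable f) :
    Summable fun a => ‖f a‖ := by
  set_option maxHeartbeats 1000000 in exact summable_norm_iff.mpr hf

theorem summable_of_summable_norm_complex {α : Type*} {f : α → ℂ}
    (hf : Summable fun a => ‖f a‖) : Summable f := by
  set_option maxHeartbeats 1000000 in exact summable_norm_iff.mp hf

theorem tsum_mul_tsum_unconditional {α β : Type*} (f : α → ℂ) (g : β → ℂ) :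
    ∑' p : α × β, f p.1 * g p.2 = (∑' a, f a) * ∑' b, g b := by
  by_cases hfg : Summable (fun p : α × β => f p.1 * g p.2)
  · by_cases hf : ∀ a, f a = 0
    · have h1 : ∑' a, f a = 0 := by
        rw [tsum_congr (fun a => hf a)]; exact tsum_zero
      have h0 : ∑' p : α × β, f p.1 * g p.2 = 0 := by
        rw [tsum_congr (fun p : α × β => by rw [hf p.1, zero_mul])]; exact tsum_zero
      rw [h0, h1, zero_mul]
    · by_cases hg : ∀ b, g b = 0
      · have h1 : ∑' b, g b = 0 := by
          rw [tsum_congr (fun b => hg b)]; exact tsum_zero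
        have h0 : ∑' p : α × β, f p.1 * g p.2 = 0 := by
          rw [tsum_congr (fun p : α × β => by rw [hg p.2, mul_zero])]; exact tsum_zero
        rw [h0, h1, mul_zero]
      · push_neg at hf hg
        obtain ⟨a₀, ha₀⟩ := hf
        obtain ⟨b₀, hb₀⟩ := hg
        have hfs : Summable f := by
          have h1 : Summable (fun a => f a * g b₀) :=
            hfg.comp_injective (i := fun a => (a, b₀)) (fun x y h => by
              simpa using congrArg Prod.fst h)
          have := h1.mul_right (g b₀)⁻¹
          simpa [mul_assoc, mul_inv_cancel₀ hb₀] using this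
        have hgs : Summable g := by
          have h1 : Summable (fun b => f a₀ * g b) :=
            hfg.comp_injective (i := fun b => (a₀, b)) (fun x y h => by
              simpa using congrArg Prod.snd h)
          have := h1.mul_left (f a₀)⁻¹
          simpa [← mul_assoc, inv_mul_cancel₀ ha₀] using this
        exact (tsum_mul_tsum_of_summable_norm (summable_norm_complex hfs)
          (summable_norm_complex hgs)).symm
  · rw [tsum_eq_zero_of_not_summable hfg]
    by_cases hfs : Summable f
    · by_cases hgs : Summable g
      · have h2 : Summable fun p : α × β => ‖f p.1 * g p.2‖ :=
          Summable.mul_norm (summable_norm_complex hfs) (summable_norm_complex hgs)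
        exact absurd (summable_of_summable_norm_complex h2) hfg
      · rw [tsum_eq_zero_of_not_summable hgs, mul_zero]
    · rw [tsum_eq_zero_of_not_summable hfs, zero_mul]

end TsumMul

section Vec
variable {n₁ n₂ : ℕ} {α : Type*}

/-- Concatenation of two vectors, indexed through `finSumFinEquiv`. -/
def fvec (x : Fin n₁ → α) (y : Fin n₂ → α) : Fin (n₁ + n₂) → α :=
  fun t => Sum.elim x y (finSumFinEquiv.symm t)

@[simp] lemma fvec_castAdd (x : Fin n₁ → α) (y : Fin n₂ → α) (i : Fin n₁) :
    fvec x y (Fin.castAdd n₂ i) = x i := by simp [fvec]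

@[simp] lemma fvec_natAdd (x : Fin n₁ → α) (y : Fin n₂ → α) (i : Fin n₂) :
    fvec x y (Fin.natAdd n₁ i) = y i := by simp [fvec]

@[simp] lemma fvec_inl (x : Fin n₁ → α) (y : Fin n₂ → α) (i : Fin n₁) :
    fvec x y (finSumFinEquiv (Sum.inl i)) = x i := by simp [fvec]

@[simp] lemma fvec_inr (x : Fin n₁ → α) (y : Fin n₂ → α) (i : Fin n₂) :
    fvec x y (finSumFinEquiv (Sum.inr i)) = y i := by simp [fvec]

/-- First component of a concatenated vector. -/
def ffst (z : Fin (n₁ + n₂) → α) : Fin n₁ → α := fun i => z (finSumFinEquiv (Sum.inl i))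

/-- Second component of a concatenated vector. -/
def fsnd (z : Fin (n₁ + n₂) → α) : Fin n₂ → α := fun i => z (finSumFinEquiv (Sum.inr i))

@[simp] lemma ffst_fvec (x : Fin n₁ → α) (y : Fin n₂ → α) : ffst (fvec x y) = x := by
  funext i; simp [ffst]

@[simp] lemma fsnd_fvec (x : Fin n₁ → α) (y : Fin n₂ → α) : fsnd (fvec x y) = y := by
  funext i; simp [fsnd]

lemma fvec_ffst_fsnd (z : Fin (n₁ + n₂) → α) : fvec (ffst z) (fsnd z) = z := by
  funext t
  obtain ⟨s, rfl⟩ := finSumFinEquiv.surjective t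
  cases s <;> simp [ffst, fsnd]

lemma fvec_comp {β : Type*} (h : α → β) (x : Fin n₁ → α) (y : Fin n₂ → α) :
    (fun t => h (fvec x y t)) = fvec (fun i => h (x i)) (fun i => h (y i)) := by
  funext t
  obtain ⟨s, rfl⟩ := finSumFinEquiv.surjective t
  cases s <;> simp

lemma fvec_add [Add α] (x x' : Fin n₁ → α) (y y' : Fin n₂ → α) :
    fvec x y + fvec x' y' = fvec (x + x') (y + y') := by
  funext t
  obtain ⟨s, rfl⟩ := finSumFinEquiv.surjective t
  cases s <;> simp

lemma fvec_zero [Zero α] : (fvec 0 0 : Fin (n₁ + n₂) → α) = 0 := by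
  funext t
  obtain ⟨s, rfl⟩ := finSumFinEquiv.surjective t
  cases s <;> simp

/-- The equivalence between pairs of vectors and concatenated vectors. -/
def fvecEquiv : ((Fin n₁ → α) × (Fin n₂ → α)) ≃ (Fin (n₁ + n₂) → α) where
  toFun p := fvec p.1 p.2
  invFun z := (ffst z, fsnd z)
  left_inv p := by simp
  right_inv z := fvec_ffst_fsnd z

end Vec

section Pmat
variable {n₁ n₂ : ℕ} (m₁ m₂ : ℕ) (M₁ : Matrix (Fin n₁) (Fin n₁) ℤ) (M₂ : Matrix (Fin n₂) (Fin n₂) ℤ)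

/-- The direct sum of two integer matrices, with scalings. -/
def pmat : Matrix (Fin (n₁ + n₂)) (Fin (n₁ + n₂)) ℤ :=
  Matrix.reindex finSumFinEquiv finSumFinEquiv
    (Matrix.fromBlocks ((m₂ : ℤ) • M₁) 0 0 ((m₁ : ℤ) • M₂))

@[simp] lemma intPair_zero_left {n : ℕ} (M : Matrix (Fin n) (Fin n) ℤ) (y : Fin n → ℚ) :
    intPair M 0 y = 0 := by simp [intPair]

@[simp] lemma intPair_zero_right {n : ℕ} (M : Matrix (Fin n) (Fin n) ℤ) (x : Fin n → ℚ) :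
    intPair M x 0 = 0 := by simp [intPair]

lemma intPair_smul_left {n : ℕ} (M : Matrix (Fin n) (Fin n) ℤ) (a : ℚ) (x y : Fin n → ℚ) :
    intPair M (a • x) y = a * intPair M x y := by
  simp only [intPair, Pi.smul_apply, smul_eq_mul, Finset.mul_sum]
  exact Finset.sum_congr rfl fun i _ => Finset.sum_congr rfl fun j _ => by ring

lemma intPair_pmat (x₁ y₁ : Fin n₁ → ℚ) (x₂ y₂ : Fin n₂ → ℚ) :
    intPair (pmat m₁ m₂ M₁ M₂) (fvec x₁ x₂) (fvec y₁ y₂) =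
      (m₂ : ℚ) * intPair M₁ x₁ y₁ + (m₁ : ℚ) * intPair M₂ x₂ y₂ := by
  unfold intPair
  rw [← Equiv.sum_comp finSumFinEquiv, Fintype.sum_sum_type]
  have key : ∀ s t, ((pmat m₁ m₂ M₁ M₂) (finSumFinEquiv s) (finSumFinEquiv t) : ℤ) =
      Matrix.fromBlocks ((m₂ : ℤ) • M₁) 0 0 ((m₁ : ℤ) • M₂) s t := by
    intro s t; simp [pmat]
  have inner : ∀ s : Fin n₁ ⊕ Fin n₂,
      (∑ j, ((pmat m₁ m₂ M₁ M₂) (finSumFinEquiv s) j : ℚ) * fvec x₁ x₂ (finSumFinEquiv s) *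
        fvec y₁ y₂ j) =
      ∑ t : Fin n₁ ⊕ Fin n₂, ((Matrix.fromBlocks ((m₂:ℤ) • M₁) 0 0 ((m₁:ℤ) • M₂) s t : ℤ) : ℚ) *
        Sum.elim x₁ x₂ s * Sum.elim y₁ y₂ t := by
    intro s
    rw [← Equiv.sum_comp finSumFinEquiv]
    refine Finset.sum_congr rfl fun t _ => ?_
    rw [key s t]
    obtain (t | t) := t <;> obtain (s | s) := s <;> simp
  simp only [inner]
  simp only [Fintype.sum_sum_type, Matrix.fromBlocks_apply₁₁, Matrix.fromBlocks_apply₁₂,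
    Matrix.fromBlocks_apply₂₁, Matrix.fromBlocks_apply₂₂, Sum.elim_inl, Sum.elim_inr,
    Matrix.smul_apply, Matrix.zero_apply, smul_eq_mul, Finset.mul_sum]
  push_cast
  congr 1 <;> refine Finset.sum_congr rfl fun i _ => ?_ <;> simp <;>
    refine Finset.sum_congr rfl fun j _ => by ring

end Pmat

lemma prod_split {b₁ b₂ : ℕ} {M : Type*} [CommMonoid M] (F : Fin (b₁ + b₂) → M) :
    ∏ i, F i = (∏ i, F (finSumFinEquiv (Sum.inl i))) * ∏ i, F (finSumFinEquiv (Sum.inr i)) := by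
  rw [← Equiv.prod_comp finSumFinEquiv, Fintype.prod_sum_type]

lemma sum_split {b₁ b₂ : ℕ} {M : Type*} [AddCommMonoid M] (F : Fin (b₁ + b₂) → M) :
    ∑ i, F i = (∑ i, F (finSumFinEquiv (Sum.inl i))) + ∑ i, F (finSumFinEquiv (Sum.inr i)) := by
  rw [← Equiv.sum_comp finSumFinEquiv, Fintype.sum_sum_type]

lemma sgn_pos_mul {m : ℚ} (hm : 0 < m) (x : ℚ) : sgn (m * x) = sgn x := by
  unfold sgn
  rcases lt_trichotomy x 0 with h | h | h
  · rw [if_neg (by nlinarith), if_pos (by nlinarith), if_neg (not_lt.mpr h.le), if_pos h]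
  · simp [h]
  · rw [if_pos (by nlinarith), if_pos h]

namespace ThetaData

variable (ξ₁ ξ₂ : ThetaData) (m₁ m₂ : ℕ)

/-- The "product" theta data: direct sum of lattices, with forms scaled. -/
def prodData : ThetaData where
  n := ξ₁.n + ξ₂.n
  b := ξ₁.b + ξ₂.b
  k := ξ₁.k + ξ₂.k
  M := pmat m₁ m₂ ξ₁.M ξ₂.M
  c := fun t => Sum.elim (fun i => fvec (ξ₁.c i) 0) (fun i => fvec 0 (ξ₂.c i))
    (finSumFinEquiv.symm t)
  c' := fun t => Sum.elim (fun i => fvec (ξ₁.c' i) 0) (fun i => fvec 0 (ξ₂.c' i))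
    (finSumFinEquiv.symm t)
  nubar := fvec ξ₁.nubar ξ₂.nubar
  alpha := fun t => Sum.elim (fun j => fvec ((m₂:ℚ)⁻¹ • ξ₁.alpha j) 0)
    (fun j => fvec 0 ((m₁:ℚ)⁻¹ • ξ₂.alpha j)) (finSumFinEquiv.symm t)

attribute [reducible] prodData

@[simp] lemma prodData_n : (prodData ξ₁ ξ₂ m₁ m₂).n = ξ₁.n + ξ₂.n := rfl
@[simp] lemma prodData_b : (prodData ξ₁ ξ₂ m₁ m₂).b = ξ₁.b + ξ₂.b := rfl
@[simp] lemma prodData_k : (prodData ξ₁ ξ₂ m₁ m₂).k = ξ₁.k + ξ₂.k := rfl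
@[simp] lemma prodData_M : (prodData ξ₁ ξ₂ m₁ m₂).M = pmat m₁ m₂ ξ₁.M ξ₂.M := rfl

@[simp] lemma prodData_c_inl (i : Fin ξ₁.b) :
    (prodData ξ₁ ξ₂ m₁ m₂).c (finSumFinEquiv (Sum.inl i)) = fvec (ξ₁.c i) 0 := by
  simp [prodData]

@[simp] lemma prodData_c_inr (i : Fin ξ₂.b) :
    (prodData ξ₁ ξ₂ m₁ m₂).c (finSumFinEquiv (Sum.inr i)) = fvec 0 (ξ₂.c i) := by
  simp [prodData]

@[simp] lemma prodData_c'_inl (i : Fin ξ₁.b) :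
    (prodData ξ₁ ξ₂ m₁ m₂).c' (finSumFinEquiv (Sum.inl i)) = fvec (ξ₁.c' i) 0 := by
  simp [prodData]

@[simp] lemma prodData_c'_inr (i : Fin ξ₂.b) :
    (prodData ξ₁ ξ₂ m₁ m₂).c' (finSumFinEquiv (Sum.inr i)) = fvec 0 (ξ₂.c' i) := by
  simp [prodData]

@[simp] lemma prodData_alpha_inl (j : Fin ξ₁.k) :
    (prodData ξ₁ ξ₂ m₁ m₂).alpha (finSumFinEquiv (Sum.inl j)) =
      fvec ((m₂:ℚ)⁻¹ • ξ₁.alpha j) 0 := by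
  simp [prodData]

@[simp] lemma prodData_alpha_inr (j : Fin ξ₂.k) :
    (prodData ξ₁ ξ₂ m₁ m₂).alpha (finSumFinEquiv (Sum.inr j)) =
      fvec 0 ((m₁:ℚ)⁻¹ • ξ₂.alpha j) := by
  simp [prodData]

@[simp] lemma prodData_c_castAdd (i : Fin ξ₁.b) :
    (prodData ξ₁ ξ₂ m₁ m₂).c (Fin.castAdd ξ₂.b i) = fvec (ξ₁.c i) 0 := by
  simp [prodData]

@[simp] lemma prodData_c_natAdd (i : Fin ξ₂.b) :
    (prodData ξ₁ ξ₂ m₁ m₂).c (Fin.natAdd ξ₁.b i) = fvec 0 (ξ₂.c i) := by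
  simp [prodData]

@[simp] lemma prodData_c'_castAdd (i : Fin ξ₁.b) :
    (prodData ξ₁ ξ₂ m₁ m₂).c' (Fin.castAdd ξ₂.b i) = fvec (ξ₁.c' i) 0 := by
  simp [prodData]

@[simp] lemma prodData_c'_natAdd (i : Fin ξ₂.b) :
    (prodData ξ₁ ξ₂ m₁ m₂).c' (Fin.natAdd ξ₁.b i) = fvec 0 (ξ₂.c' i) := by
  simp [prodData]

lemma prodData_nu (g : Fin (ξ₁.n + ξ₂.n) → ℤ) :
    (prodData ξ₁ ξ₂ m₁ m₂).nu g = fvec (ξ₁.nu (ffst g)) (ξ₂.nu (fsnd g)) := by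
  show fvec ξ₁.nubar ξ₂.nubar + (fun t => ((g t : ℤ) : ℚ)) = _
  conv_lhs => rw [← fvec_ffst_fsnd g]
  rw [fvec_comp (fun z : ℤ => (z : ℚ)), fvec_add]
  rfl

lemma term_prodData (h₁ : 1 ≤ m₁) (h₂ : 1 ≤ m₂) (z : ℂ)
    (g₁ : Fin ξ₁.n → ℤ) (g₂ : Fin ξ₂.n → ℤ) :
    (prodData ξ₁ ξ₂ m₁ m₂).term z (fvec g₁ g₂) =
      ξ₁.term ((m₂ : ℂ) * z) g₁ * ξ₂.term ((m₁ : ℂ) * z) g₂ := by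
  have hm₁ : (0:ℚ) < (m₁:ℚ) := by exact_mod_cast h₁
  have hm₂ : (0:ℚ) < (m₂:ℚ) := by exact_mod_cast h₂
  have hnu : (prodData ξ₁ ξ₂ m₁ m₂).nu (fvec g₁ g₂) = fvec (ξ₁.nu g₁) (ξ₂.nu g₂) := by
    rw [prodData_nu, ffst_fvec, fsnd_fvec]
  unfold term
  rw [hnu]
  have hsgn : (∏ i, (sgn (intPair (prodData ξ₁ ξ₂ m₁ m₂).M ((prodData ξ₁ ξ₂ m₁ m₂).c i)
        (fvec (ξ₁.nu g₁) (ξ₂.nu g₂))) -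
      sgn (intPair (prodData ξ₁ ξ₂ m₁ m₂).M ((prodData ξ₁ ξ₂ m₁ m₂).c' i)
        (fvec (ξ₁.nu g₁) (ξ₂.nu g₂))))) =
      (∏ i, (sgn (intPair ξ₁.M (ξ₁.c i) (ξ₁.nu g₁)) - sgn (intPair ξ₁.M (ξ₁.c' i) (ξ₁.nu g₁)))) *
      (∏ i, (sgn (intPair ξ₂.M (ξ₂.c i) (ξ₂.nu g₂)) - sgn (intPair ξ₂.M (ξ₂.c' i) (ξ₂.nu g₂)))) := by
    refine Eq.trans (prod_split _) ?_
    congr 1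
    · refine Finset.prod_congr rfl fun i _ => ?_
      rw [prodData_c_inl, prodData_c'_inl, prodData_M, intPair_pmat, intPair_pmat]
      simp [sgn_pos_mul hm₂]
    · refine Finset.prod_congr rfl fun i _ => ?_
      rw [prodData_c_inr, prodData_c'_inr, prodData_M, intPair_pmat, intPair_pmat]
      simp [sgn_pos_mul hm₁]
  have halpha : (∏ j, intPair (prodData ξ₁ ξ₂ m₁ m₂).M ((prodData ξ₁ ξ₂ m₁ m₂).alpha j)
        (fvec (ξ₁.nu g₁) (ξ₂.nu g₂))) =
      (∏ j, intPair ξ₁.M (ξ₁.alpha j) (ξ₁.nu g₁)) *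
      (∏ j, intPair ξ₂.M (ξ₂.alpha j) (ξ₂.nu g₂)) := by
    refine Eq.trans (prod_split _) ?_
    congr 1
    · refine Finset.prod_congr rfl fun j _ => ?_
      rw [prodData_alpha_inl, prodData_M, intPair_pmat]
      simp [intPair_smul_left, ← mul_assoc, mul_inv_cancel₀ hm₂.ne']
    · refine Finset.prod_congr rfl fun j _ => ?_
      rw [prodData_alpha_inr, prodData_M, intPair_pmat]
      simp [intPair_smul_left, ← mul_assoc, mul_inv_cancel₀ hm₁.ne']
  have hq : intPair (prodData ξ₁ ξ₂ m₁ m₂).M (fvec (ξ₁.nu g₁) (ξ₂.nu g₂))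
        (fvec (ξ₁.nu g₁) (ξ₂.nu g₂)) =
      (m₂:ℚ) * intPair ξ₁.M (ξ₁.nu g₁) (ξ₁.nu g₁) + (m₁:ℚ) * intPair ξ₂.M (ξ₂.nu g₂) (ξ₂.nu g₂) := by
    rw [prodData_M, intPair_pmat]
  rw [hsgn, halpha, hq]
  have hexp : Complex.exp (2 * (Real.pi : ℂ) * Complex.I *
        ((((m₂:ℚ) * intPair ξ₁.M (ξ₁.nu g₁) (ξ₁.nu g₁) +
          (m₁:ℚ) * intPair ξ₂.M (ξ₂.nu g₂) (ξ₂.nu g₂)) / 2 : ℚ) : ℂ) * z) =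
      Complex.exp (2 * (Real.pi : ℂ) * Complex.I *
        ((intPair ξ₁.M (ξ₁.nu g₁) (ξ₁.nu g₁) / 2 : ℚ) : ℂ) * ((m₂ : ℂ) * z)) *
      Complex.exp (2 * (Real.pi : ℂ) * Complex.I *
        ((intPair ξ₂.M (ξ₂.nu g₂) (ξ₂.nu g₂) / 2 : ℚ) : ℂ) * ((m₁ : ℂ) * z)) := by
    rw [← Complex.exp_add]
    congr 1
    push_cast
    ring
  rw [hexp]
  push_cast
  ring

theorem Theta_prodData (h₁ : 1 ≤ m₁) (h₂ : 1 ≤ m₂) (z : ℂ) :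
    (prodData ξ₁ ξ₂ m₁ m₂).Theta z = ξ₁.Theta ((m₂ : ℂ) * z) * ξ₂.Theta ((m₁ : ℂ) * z) := by
  calc (prodData ξ₁ ξ₂ m₁ m₂).Theta z
      = ∑' p : (Fin ξ₁.n → ℤ) × (Fin ξ₂.n → ℤ),
          (prodData ξ₁ ξ₂ m₁ m₂).term z (fvec p.1 p.2) :=
        (Equiv.tsum_eq fvecEquiv (fun g => (prodData ξ₁ ξ₂ m₁ m₂).term z g)).symm
    _ = ∑' p : (Fin ξ₁.n → ℤ) × (Fin ξ₂.n → ℤ),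
          ξ₁.term ((m₂ : ℂ) * z) p.1 * ξ₂.term ((m₁ : ℂ) * z) p.2 :=
        tsum_congr fun p => term_prodData ξ₁ ξ₂ m₁ m₂ h₁ h₂ z p.1 p.2
    _ = _ := tsum_mul_tsum_unconditional _ _

end ThetaData

section LinAlg
variable (n₁ n₂ : ℕ)

lemma fvec_smul {n₁ n₂ : ℕ} (a : ℚ) (x : Fin n₁ → ℚ) (y : Fin n₂ → ℚ) :
    fvec (a • x) (a • y) = a • fvec x y := by
  funext t
  obtain ⟨s, rfl⟩ := finSumFinEquiv.surjective t
  cases s <;> simp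

/-- The linear equivalence between pairs of vectors and concatenated vectors. -/
def fvecLinear : ((Fin n₁ → ℚ) × (Fin n₂ → ℚ)) ≃ₗ[ℚ] (Fin (n₁ + n₂) → ℚ) where
  toFun p := fvec p.1 p.2
  invFun z := (ffst z, fsnd z)
  left_inv p := by simp
  right_inv z := fvec_ffst_fsnd z
  map_add' p q := by simp [← fvec_add]
  map_smul' a p := by simp [← fvec_smul]

@[simp] lemma fvecLinear_apply (p : (Fin n₁ → ℚ) × (Fin n₂ → ℚ)) :
    fvecLinear n₁ n₂ p = fvec p.1 p.2 := rfl

/-- `fvecLinear` as a linear map. -/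
def fvecMap : ((Fin n₁ → ℚ) × (Fin n₂ → ℚ)) →ₗ[ℚ] (Fin (n₁ + n₂) → ℚ) :=
  (fvecLinear n₁ n₂ : ((Fin n₁ → ℚ) × (Fin n₂ → ℚ)) ≃ₗ[ℚ] (Fin (n₁ + n₂) → ℚ))

@[simp] lemma fvecMap_apply (p : (Fin n₁ → ℚ) × (Fin n₂ → ℚ)) :
    fvecMap n₁ n₂ p = fvec p.1 p.2 := rfl

lemma finrank_map_fvecMap (W : Submodule ℚ ((Fin n₁ → ℚ) × (Fin n₂ → ℚ))) :
    Module.finrank ℚ (W.map (fvecMap n₁ n₂)) = Module.finrank ℚ W :=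
  LinearEquiv.finrank_map_eq (fvecLinear n₁ n₂) W

lemma finrank_prod_submodule {V₁ V₂ : Type*} [AddCommGroup V₁] [Module ℚ V₁]
    [AddCommGroup V₂] [Module ℚ V₂] [FiniteDimensional ℚ V₁] [FiniteDimensional ℚ V₂]
    (P₁ : Submodule ℚ V₁) (P₂ : Submodule ℚ V₂) :
    Module.finrank ℚ (P₁.prod P₂) = Module.finrank ℚ P₁ + Module.finrank ℚ P₂ := by
  have e : (P₁.prod P₂) ≃ₗ[ℚ] P₁ × P₂ :=
    { toFun := fun v => (⟨v.1.1, v.2.1⟩, ⟨v.1.2, v.2.2⟩)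
      invFun := fun p => ⟨(p.1.1, p.2.1), ⟨p.1.2, p.2.2⟩⟩
      map_add' := fun x y => rfl
      map_smul' := fun c x => rfl
      left_inv := fun x => rfl
      right_inv := fun p => rfl }
  rw [e.finrank_eq, Module.finrank_prod]

end LinAlg

namespace ThetaData

/-- The trivial theta data on the zero lattice; its theta series is constant `1`. -/
def trivialData : ThetaData where
  n := 0
  b := 0
  k := 0
  M := 0
  c := Fin.elim0
  c' := Fin.elim0
  nubar := 0
  alpha := Fin.elim0

instance : IsEmpty (Fin trivialData.n) := (inferInstance : IsEmpty (Fin 0))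
instance : IsEmpty (Fin trivialData.b) := (inferInstance : IsEmpty (Fin 0))
instance : IsEmpty (Fin trivialData.k) := (inferInstance : IsEmpty (Fin 0))

lemma isThetaData_trivialData : trivialData.IsThetaData := by
  refine ⟨le_refl 0, by simp [trivialData, Matrix.IsSymm], fun x _ => Subsingleton.elim _ _,
    ⟨⊤, ?_, fun v _ hv => absurd (Subsingleton.elim v 0) hv⟩, ?_,
    fun v hv hv' => absurd (Subsingleton.elim v 0) hv', fun i => i.elim0, fun i => i.elim0,
    fun i => i.elim0, fun i => i.elim0⟩
  · rw [finrank_top]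
    exact Module.finrank_fin_fun (R := ℚ)
  · have : Set.range (trivialData.c) = ∅ := by
      rw [Set.range_eq_empty_iff]
      exact ⟨fun i => i.elim0⟩
    rw [this, Submodule.span_empty]
    exact finrank_bot ℚ _

lemma Theta_trivialData (z : ℂ) : trivialData.Theta z = 1 := by
  unfold Theta
  rw [tsum_eq_single (0 : Fin trivialData.n → ℤ)
    (fun b hb => absurd (Subsingleton.elim b 0) hb)]
  unfold term
  have h0 : intPair trivialData.M (trivialData.nu 0) (trivialData.nu 0) = 0 := by
    simp [trivialData, intPair]
  rw [h0]
  simp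

end ThetaData

lemma pmat_apply {n₁ n₂ : ℕ} (m₁ m₂ : ℕ) (M₁ : Matrix (Fin n₁) (Fin n₁) ℤ)
    (M₂ : Matrix (Fin n₂) (Fin n₂) ℤ) (s t : Fin n₁ ⊕ Fin n₂) :
    pmat m₁ m₂ M₁ M₂ (finSumFinEquiv s) (finSumFinEquiv t) =
      Matrix.fromBlocks ((m₂ : ℤ) • M₁) 0 0 ((m₁ : ℤ) • M₂) s t := by
  simp [pmat]

namespace ThetaData

theorem isThetaData_prodData (ξ₁ ξ₂ : ThetaData) (m₁ m₂ : ℕ)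
    (hξ₁ : ξ₁.IsThetaData) (hξ₂ : ξ₂.IsThetaData) (h₁ : 1 ≤ m₁) (h₂ : 1 ≤ m₂) :
    (prodData ξ₁ ξ₂ m₁ m₂).IsThetaData := by
  obtain ⟨hb₁, hsym₁, hnd₁, ⟨P₁, hP₁rank, hP₁pos⟩, hc₁rank, hc₁neg, hcc'₁, hc'c'₁, hcc'neg₁,
    hc'nu₁⟩ := hξ₁
  obtain ⟨hb₂, hsym₂, hnd₂, ⟨P₂, hP₂rank, hP₂pos⟩, hc₂rank, hc₂neg, hcc'₂, hc'c'₂, hcc'neg₂,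
    hc'nu₂⟩ := hξ₂
  have hm₁ : (0:ℚ) < (m₁:ℚ) := by exact_mod_cast h₁
  have hm₂ : (0:ℚ) < (m₂:ℚ) := by exact_mod_cast h₂
  -- the span of the concatenated `c`'s
  have memL : ∀ w ∈ Submodule.span ℚ (Set.range ξ₁.c),
      fvec w (0 : Fin ξ₂.n → ℚ) ∈ Submodule.span ℚ (Set.range (prodData ξ₁ ξ₂ m₁ m₂).c) := by
    intro w hw
    induction hw using Submodule.span_induction with
    | mem x hx =>
      obtain ⟨i, rfl⟩ := hx
      exact Submodule.subset_span ⟨finSumFinEquiv (Sum.inl i), by simp⟩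
    | zero => rw [fvec_zero]; exact zero_mem _
    | add x y hx hy ihx ihy =>
      rw [show (fvec (x + y) 0 : Fin (ξ₁.n + ξ₂.n) → ℚ) = fvec x 0 + fvec y 0 by
        rw [fvec_add, add_zero]]
      exact add_mem ihx ihy
    | smul a x hx ih =>
      rw [show (fvec (a • x) 0 : Fin (ξ₁.n + ξ₂.n) → ℚ) = a • fvec x 0 by
        rw [← fvec_smul, smul_zero]]
      exact Submodule.smul_mem _ a ih
  have memR : ∀ w ∈ Submodule.span ℚ (Set.range ξ₂.c),
      fvec (0 : Fin ξ₁.n → ℚ) w ∈ Submodule.span ℚ (Set.range (prodData ξ₁ ξ₂ m₁ m₂).c) := by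
    intro w hw
    induction hw using Submodule.span_induction with
    | mem x hx =>
      obtain ⟨i, rfl⟩ := hx
      exact Submodule.subset_span ⟨finSumFinEquiv (Sum.inr i), by simp⟩
    | zero => rw [fvec_zero]; exact zero_mem _
    | add x y hx hy ihx ihy =>
      rw [show (fvec 0 (x + y) : Fin (ξ₁.n + ξ₂.n) → ℚ) = fvec 0 x + fvec 0 y by
        rw [fvec_add, add_zero]]
      exact add_mem ihx ihy
    | smul a x hx ih =>
      rw [show (fvec 0 (a • x) : Fin (ξ₁.n + ξ₂.n) → ℚ) = a • fvec 0 x by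
        rw [← fvec_smul, smul_zero]]
      exact Submodule.smul_mem _ a ih
  have hspan : Submodule.span ℚ (Set.range (prodData ξ₁ ξ₂ m₁ m₂).c) =
      Submodule.map (fvecMap ξ₁.n ξ₂.n)
        ((Submodule.span ℚ (Set.range ξ₁.c)).prod (Submodule.span ℚ (Set.range ξ₂.c))) := by
    apply le_antisymm
    · rw [Submodule.span_le]
      rintro v ⟨t, rfl⟩
      obtain ⟨s, rfl⟩ := finSumFinEquiv.surjective t
      cases s with
      | inl i =>
        rw [prodData_c_inl]
        exact Submodule.mem_map.mpr ⟨(ξ₁.c i, 0),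
          Submodule.mem_prod.mpr ⟨Submodule.subset_span ⟨i, rfl⟩, Submodule.zero_mem _⟩, rfl⟩
      | inr i =>
        rw [prodData_c_inr]
        exact Submodule.mem_map.mpr ⟨(0, ξ₂.c i),
          Submodule.mem_prod.mpr ⟨Submodule.zero_mem _, Submodule.subset_span ⟨i, rfl⟩⟩, rfl⟩
    · rintro v hv
      obtain ⟨p, hp, rfl⟩ := Submodule.mem_map.mp hv
      obtain ⟨hp1, hp2⟩ := Submodule.mem_prod.mp hp
      have hdec : fvecMap ξ₁.n ξ₂.n p = fvec p.1 0 + fvec 0 p.2 := by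
        rw [fvec_add, add_zero, zero_add]; rfl
      show fvecMap ξ₁.n ξ₂.n p ∈ Submodule.span ℚ (Set.range (prodData ξ₁ ξ₂ m₁ m₂).c)
      rw [hdec]
      exact add_mem (memL _ hp1) (memR _ hp2)
  refine ⟨?_, ?_, ?_, ?_, ?_, ?_, ?_, ?_, ?_, ?_⟩
  · show 2 * (ξ₁.b + ξ₂.b) ≤ ξ₁.n + ξ₂.n
    omega
  · -- symmetry
    show (pmat m₁ m₂ ξ₁.M ξ₂.M).IsSymm
    refine Matrix.IsSymm.ext fun i j => ?_
    obtain ⟨s, rfl⟩ := finSumFinEquiv.surjective i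
    obtain ⟨t, rfl⟩ := finSumFinEquiv.surjective j
    rw [pmat_apply, pmat_apply]
    cases s <;> cases t <;>
      simp only [Matrix.fromBlocks_apply₁₁, Matrix.fromBlocks_apply₁₂,
        Matrix.fromBlocks_apply₂₁, Matrix.fromBlocks_apply₂₂, Matrix.zero_apply,
        Matrix.smul_apply, hsym₁.apply, hsym₂.apply]
  · -- non-degeneracy
    intro x hx
    have hxe : x = fvec (ffst x) (fsnd x) := (fvec_ffst_fsnd x).symm
    have hx1 : ffst x = 0 := by
      apply hnd₁
      intro y₁
      have h := hx (fvec y₁ 0)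
      rw [hxe, prodData_M, intPair_pmat] at h
      rw [intPair_zero_right, mul_zero, add_zero] at h
      exact (mul_eq_zero.mp h).resolve_left hm₂.ne'
    have hx2 : fsnd x = 0 := by
      apply hnd₂
      intro y₂
      have h := hx (fvec 0 y₂)
      rw [hxe, prodData_M, intPair_pmat] at h
      rw [intPair_zero_right, mul_zero, zero_add] at h
      exact (mul_eq_zero.mp h).resolve_left hm₁.ne'
    rw [hxe, hx1, hx2, fvec_zero]
  · -- positive definite subspace
    refine ⟨Submodule.map (fvecMap ξ₁.n ξ₂.n) (P₁.prod P₂), ?_, ?_⟩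
    · refine Eq.trans (finrank_map_fvecMap _ _ (P₁.prod P₂)) ?_
      rw [finrank_prod_submodule, hP₁rank, hP₂rank]
      show _ = ξ₁.n + ξ₂.n - (ξ₁.b + ξ₂.b)
      omega
    · rintro v hv hv0
      obtain ⟨p, hp, rfl⟩ := Submodule.mem_map.mp hv
      obtain ⟨hp1, hp2⟩ := Submodule.mem_prod.mp hp
      have hv0' : (fvec p.1 p.2 : Fin (ξ₁.n + ξ₂.n) → ℚ) ≠ 0 := hv0
      show 0 < intPair (pmat m₁ m₂ ξ₁.M ξ₂.M) (fvec p.1 p.2) (fvec p.1 p.2)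
      rw [intPair_pmat]
      have hne : p.1 ≠ 0 ∨ p.2 ≠ 0 := by
        by_contra h
        push_neg at h
        apply hv0'
        rw [h.1, h.2, fvec_zero]
      have hq1 : 0 ≤ intPair ξ₁.M p.1 p.1 := by
        rcases eq_or_ne p.1 0 with h | h
        · rw [h, intPair_zero_left]
        · exact (hP₁pos p.1 hp1 h).le
      have hq2 : 0 ≤ intPair ξ₂.M p.2 p.2 := by
        rcases eq_or_ne p.2 0 with h | h
        · rw [h, intPair_zero_left]
        · exact (hP₂pos p.2 hp2 h).le
      rcases hne with h | h
      · nlinarith [hP₁pos p.1 hp1 h]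
      · nlinarith [hP₂pos p.2 hp2 h]
  · -- rank of the span of the `c`'s
    rw [hspan]
    refine Eq.trans (finrank_map_fvecMap _ _ _) ?_
    rw [finrank_prod_submodule, hc₁rank, hc₂rank]
  · -- negative definiteness on the span of the `c`'s
    rintro v hv hv0
    rw [hspan] at hv
    obtain ⟨p, hp, rfl⟩ := Submodule.mem_map.mp hv
    obtain ⟨hp1, hp2⟩ := Submodule.mem_prod.mp hp
    have hv0' : (fvec p.1 p.2 : Fin (ξ₁.n + ξ₂.n) → ℚ) ≠ 0 := hv0
    show intPair (pmat m₁ m₂ ξ₁.M ξ₂.M) (fvec p.1 p.2) (fvec p.1 p.2) < 0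
    rw [intPair_pmat]
    have hne : p.1 ≠ 0 ∨ p.2 ≠ 0 := by
      by_contra h
      push_neg at h
      exact hv0' (by rw [h.1, h.2, fvec_zero])
    have hq1 : intPair ξ₁.M p.1 p.1 ≤ 0 := by
      rcases eq_or_ne p.1 0 with h | h
      · rw [h, intPair_zero_left]
      · exact (hc₁neg p.1 hp1 h).le
    have hq2 : intPair ξ₂.M p.2 p.2 ≤ 0 := by
      rcases eq_or_ne p.2 0 with h | h
      · rw [h, intPair_zero_left]
      · exact (hc₂neg p.2 hp2 h).le
    rcases hne with h | h
    · nlinarith [hc₁neg p.1 hp1 h]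
    · nlinarith [hc₂neg p.2 hp2 h]
  · -- orthogonality of c and c'
    intro i j hij
    obtain ⟨s, rfl⟩ := finSumFinEquiv.surjective i
    obtain ⟨t, rfl⟩ := finSumFinEquiv.surjective j
    cases s with
    | inl s =>
      cases t with
      | inl t =>
        have hst : s ≠ t := fun h => hij (by rw [h])
        rw [prodData_c_inl, prodData_c'_inl, prodData_M, intPair_pmat, hcc'₁ s t hst,
          intPair_zero_left, mul_zero, mul_zero, add_zero]
      | inr t =>
        rw [prodData_c_inl, prodData_c'_inr, prodData_M, intPair_pmat,
          intPair_zero_right, intPair_zero_left, mul_zero, mul_zero, add_zero]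
    | inr s =>
      cases t with
      | inl t =>
        rw [prodData_c_inr, prodData_c'_inl, prodData_M, intPair_pmat,
          intPair_zero_right, intPair_zero_left, mul_zero, mul_zero, add_zero]
      | inr t =>
        have hst : s ≠ t := fun h => hij (by rw [h])
        rw [prodData_c_inr, prodData_c'_inr, prodData_M, intPair_pmat, hcc'₂ s t hst,
          intPair_zero_left, mul_zero, mul_zero, add_zero]
  · -- c' pairwise orthogonal
    intro i j
    obtain ⟨s, rfl⟩ := finSumFinEquiv.surjective i
    obtain ⟨t, rfl⟩ := finSumFinEquiv.surjective j
    cases s <;> cases t <;>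
      simp [prodData_c'_inl, prodData_c'_inr, prodData_M, intPair_pmat, hc'c'₁, hc'c'₂]
  · -- B(c_i, c'_i) < 0
    intro i
    obtain ⟨s, rfl⟩ := finSumFinEquiv.surjective i
    cases s with
    | inl s =>
      rw [prodData_c_inl, prodData_c'_inl, prodData_M, intPair_pmat,
        intPair_zero_left, mul_zero, add_zero]
      exact mul_neg_of_pos_of_neg hm₂ (hcc'neg₁ s)
    | inr s =>
      rw [prodData_c_inr, prodData_c'_inr, prodData_M, intPair_pmat,
        intPair_zero_left, mul_zero, zero_add]
      exact mul_neg_of_pos_of_neg hm₁ (hcc'neg₂ s)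
  · -- B(c'_i, ν) ≠ 0
    intro i g
    obtain ⟨s, rfl⟩ := finSumFinEquiv.surjective i
    have hnug : (prodData ξ₁ ξ₂ m₁ m₂).nu g = fvec (ξ₁.nu (ffst g)) (ξ₂.nu (fsnd g)) :=
      prodData_nu ξ₁ ξ₂ m₁ m₂ g
    cases s with
    | inl s =>
      rw [prodData_c'_inl, prodData_M, hnug, intPair_pmat, intPair_zero_left,
        mul_zero, add_zero]
      exact mul_ne_zero hm₂.ne' (hc'nu₁ s (ffst g))
    | inr s =>
      rw [prodData_c'_inr, prodData_M, hnug, intPair_pmat, intPair_zero_left,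
        mul_zero, zero_add]
      exact mul_ne_zero hm₁.ne' (hc'nu₂ s (fsnd g))

end ThetaData

namespace ThetaData

lemma Theta_prodData_levels (ξ₁ ξ₂ : ThetaData) (N₁ N₂ : ℕ) (h₁ : 1 ≤ N₁) (h₂ : 1 ≤ N₂)
    (τ : ℂ) :
    (prodData ξ₁ ξ₂ N₁ N₂).Theta (τ / ((N₁ * N₂ : ℕ) : ℂ)) =
      ξ₁.Theta (τ / (N₁ : ℂ)) * ξ₂.Theta (τ / (N₂ : ℂ)) := by
  have hN₁ : ((N₁ : ℂ)) ≠ 0 := Nat.cast_ne_zero.mpr (by omega)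
  have hN₂ : ((N₂ : ℂ)) ≠ 0 := Nat.cast_ne_zero.mpr (by omega)
  rw [Theta_prodData ξ₁ ξ₂ N₁ N₂ h₁ h₂]
  have e1 : (N₂ : ℂ) * (τ / ((N₁ * N₂ : ℕ) : ℂ)) = τ / (N₁ : ℂ) := by
    push_cast
    field_simp
  have e2 : (N₁ : ℂ) * (τ / ((N₁ * N₂ : ℕ) : ℂ)) = τ / (N₂ : ℂ) := by
    push_cast
    field_simp
  rw [e1, e2]

lemma Theta_levelUp (ξ : ThetaData) (N m : ℕ) (hN : 1 ≤ N) (hm : 1 ≤ m) (τ : ℂ) :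
    (prodData ξ trivialData 1 m).Theta (τ / ((N * m : ℕ) : ℂ)) = ξ.Theta (τ / (N : ℂ)) := by
  have hN' : ((N : ℂ)) ≠ 0 := Nat.cast_ne_zero.mpr (by omega)
  have hm' : ((m : ℂ)) ≠ 0 := Nat.cast_ne_zero.mpr (by omega)
  rw [Theta_prodData ξ trivialData 1 m (le_refl 1) hm, Theta_trivialData, mul_one]
  congr 1
  push_cast
  field_simp

end ThetaData

/-- Every element of `𝓜` is a finite ℚ-linear combination
`Σ_{i=1}^{n} a_i · (τ ↦ Θ_{ξ_i}(τ/N))` for some theta data `ξ₁,…,ξ_n`, rational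
numbers `a₁,…,a_n` and a single integer `N ≥ 1`. -/
theorem mem_MM_eq_linear_combination (f : UpperHalfPlane → ℂ) (hf : f ∈ MM) :
    ∃ (n N : ℕ) (ξs : Fin n → ThetaData) (a : Fin n → ℚ),
      (∀ i, (ξs i).IsThetaData) ∧ 1 ≤ N ∧
      f = fun τ : UpperHalfPlane => ∑ i, (a i : ℂ) * (ξs i).Theta ((τ : ℂ) / N) := by
  induction hf using Algebra.adjoin_induction with
  | mem g hg =>
    obtain ⟨ξ, N, hξ, hN, rfl⟩ := hg
    refine ⟨1, N, ![ξ], ![1], fun i => by fin_cases i <;> exact hξ, hN, ?_⟩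
    funext τ
    simp
  | algebraMap r =>
    refine ⟨1, 1, ![ThetaData.trivialData], ![r],
      fun i => by fin_cases i <;> exact ThetaData.isThetaData_trivialData, le_refl 1, ?_⟩
    funext τ
    have h1 : (algebraMap ℚ (UpperHalfPlane → ℂ) r) τ = algebraMap ℚ ℂ r := rfl
    rw [h1, eq_ratCast (algebraMap ℚ ℂ) r]
    simp [ThetaData.Theta_trivialData]
  | add g₁ g₂ hg₁ hg₂ ih₁ ih₂ =>
    obtain ⟨n₁, N₁, ξs₁, a₁, hξs₁, hN₁, rfl⟩ := ih₁
    obtain ⟨n₂, N₂, ξs₂, a₂, hξs₂, hN₂, rfl⟩ := ih₂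
    have hN : 1 ≤ N₁ * N₂ := Nat.one_le_iff_ne_zero.mpr (Nat.mul_ne_zero (by omega) (by omega))
    refine ⟨n₁ + n₂, N₁ * N₂,
      fun t => Sum.elim (fun i => ThetaData.prodData (ξs₁ i) ThetaData.trivialData 1 N₂)
        (fun i => ThetaData.prodData (ξs₂ i) ThetaData.trivialData 1 N₁)
        (finSumFinEquiv.symm t),
      fun t => Sum.elim a₁ a₂ (finSumFinEquiv.symm t), ?_, hN, ?_⟩
    · intro t
      obtain ⟨s, rfl⟩ := finSumFinEquiv.surjective t
      simp only [Equiv.symm_apply_apply]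
      cases s with
      | inl i =>
        exact ThetaData.isThetaData_prodData _ _ _ _ (hξs₁ i)
          ThetaData.isThetaData_trivialData (le_refl 1) hN₂
      | inr i =>
        exact ThetaData.isThetaData_prodData _ _ _ _ (hξs₂ i)
          ThetaData.isThetaData_trivialData (le_refl 1) hN₁
    · funext τ
      show (∑ i, (a₁ i : ℂ) * (ξs₁ i).Theta ((τ : ℂ) / N₁)) +
          (∑ i, (a₂ i : ℂ) * (ξs₂ i).Theta ((τ : ℂ) / N₂)) = _
      rw [sum_split (b₁ := n₁) (b₂ := n₂)]
      congr 1
      · refine Finset.sum_congr rfl fun i _ => ?_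
        simp only [Equiv.symm_apply_apply, Sum.elim_inl]
        rw [ThetaData.Theta_levelUp (ξs₁ i) N₁ N₂ hN₁ hN₂ (τ : ℂ)]
      · refine Finset.sum_congr rfl fun i _ => ?_
        simp only [Equiv.symm_apply_apply, Sum.elim_inr]
        have hcomm : ((N₁ * N₂ : ℕ) : ℂ) = ((N₂ * N₁ : ℕ) : ℂ) := by push_cast; ring
        rw [hcomm, ThetaData.Theta_levelUp (ξs₂ i) N₂ N₁ hN₂ hN₁ (τ : ℂ)]
  | mul g₁ g₂ hg₁ hg₂ ih₁ ih₂ =>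
    obtain ⟨n₁, N₁, ξs₁, a₁, hξs₁, hN₁, rfl⟩ := ih₁
    obtain ⟨n₂, N₂, ξs₂, a₂, hξs₂, hN₂, rfl⟩ := ih₂
    have hN : 1 ≤ N₁ * N₂ := Nat.one_le_iff_ne_zero.mpr (Nat.mul_ne_zero (by omega) (by omega))
    refine ⟨n₁ * n₂, N₁ * N₂,
      fun t => ThetaData.prodData (ξs₁ (finProdFinEquiv.symm t).1)
        (ξs₂ (finProdFinEquiv.symm t).2) N₁ N₂,
      fun t => a₁ (finProdFinEquiv.symm t).1 * a₂ (finProdFinEquiv.symm t).2, ?_, hN, ?_⟩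
    · intro t
      exact ThetaData.isThetaData_prodData _ _ _ _ (hξs₁ _) (hξs₂ _) hN₁ hN₂
    · funext τ
      show (∑ i, (a₁ i : ℂ) * (ξs₁ i).Theta ((τ : ℂ) / N₁)) *
          (∑ j, (a₂ j : ℂ) * (ξs₂ j).Theta ((τ : ℂ) / N₂)) = _
      rw [Finset.sum_mul_sum]
      rw [show (∑ t : Fin (n₁ * n₂),
          ((a₁ (finProdFinEquiv.symm t).1 * a₂ (finProdFinEquiv.symm t).2 : ℚ) : ℂ) *
            (ThetaData.prodData (ξs₁ (finProdFinEquiv.symm t).1)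
              (ξs₂ (finProdFinEquiv.symm t).2) N₁ N₂).Theta ((τ : ℂ) / ((N₁ * N₂ : ℕ) : ℂ))) =
        ∑ p : Fin n₁ × Fin n₂,
          ((a₁ (finProdFinEquiv.symm (finProdFinEquiv p)).1 *
            a₂ (finProdFinEquiv.symm (finProdFinEquiv p)).2 : ℚ) : ℂ) *
            (ThetaData.prodData (ξs₁ (finProdFinEquiv.symm (finProdFinEquiv p)).1)
              (ξs₂ (finProdFinEquiv.symm (finProdFinEquiv p)).2) N₁ N₂).Theta
                ((τ : ℂ) / ((N₁ * N₂ : ℕ) : ℂ))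
        from (Equiv.sum_comp finProdFinEquiv _).symm]
      rw [Fintype.sum_prod_type]
      refine Finset.sum_congr rfl fun i _ => ?_
      refine Finset.sum_congr rfl fun j _ => ?_
      simp only [Equiv.symm_apply_apply]
      rw [ThetaData.Theta_prodData_levels (ξs₁ i) (ξs₂ j) N₁ N₂ hN₁ hN₂ (τ : ℂ)]
      push_cast
      ring
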